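/- Fix K > 0, ν ≥ 0 and μ ≥ 0, and for t > 0 set A(t) = 1 + K²·t^ν/(1+K)². Then as t → ∞, the ratio [ log₂( 1 + t·A(t)/( A(t) + t^μ/(1+K)² ) ) + log₂( 1 + t/(1+K)² ) ] / log₂(1 + t) converges to max{1, min{2, 2 + ν − μ}}; in particular the limit equals min{2, 2 + ν − μ} when μ < ν + 1, and equals 1 when μ ≥ ν + 1. -/

import Mathlib

open Filter
open Topology


lemma aux_log_ratio (f : ℝ → ℝ) (α m M : ℝ) (hm : 0 < m) (hM : 0 < M)
    (hb : ∀ᶠ t : ℝ in atTop, m * t ^ α ≤ f t ∧ f t ≤ M * t ^ α) :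
    Tendsto (fun t => Real.log (f t) / Real.log t) atTop (𝓝 α) := by
  have hlog : Tendsto Real.log atTop atTop := Real.tendsto_log_atTop
  have h0 : ∀ C : ℝ, Tendsto (fun t => Real.log C / Real.log t + α) atTop (𝓝 α) := by
    intro C
    have := (tendsto_const_nhds (x := Real.log C) (f := atTop)).div_atTop hlog
    simpa using this.add (tendsto_const_nhds (x := α))
  apply tendsto_of_tendsto_of_tendsto_of_le_of_le' (h0 m) (h0 M)
  · filter_upwards [hb, eventually_gt_atTop 1] with t hbt ht
    have ht0 : (0:ℝ) < t := by linarith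
    have hlt : 0 < Real.log t := Real.log_pos ht
    have hfp : 0 < m * t ^ α := by positivity
    have hle : Real.log m + α * Real.log t ≤ Real.log (f t) := by
      have := Real.log_le_log hfp hbt.1
      rwa [Real.log_mul hm.ne' (Real.rpow_pos_of_pos ht0 α).ne', Real.log_rpow ht0] at this
    have : (Real.log m + α * Real.log t) / Real.log t ≤ Real.log (f t) / Real.log t := by
      gcongr
    calc Real.log m / Real.log t + α = (Real.log m + α * Real.log t) / Real.log t := by
          field_simp
      _ ≤ _ := this
  · filter_upwards [hb, eventually_gt_atTop 1] with t hbt ht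
    have ht0 : (0:ℝ) < t := by linarith
    have hlt : 0 < Real.log t := Real.log_pos ht
    have hfp : 0 < m * t ^ α := by positivity
    have hle : Real.log (f t) ≤ Real.log M + α * Real.log t := by
      have := Real.log_le_log (lt_of_lt_of_le hfp hbt.1) hbt.2
      rwa [Real.log_mul hM.ne' (Real.rpow_pos_of_pos ht0 α).ne', Real.log_rpow ht0] at this
    calc Real.log (f t) / Real.log t ≤ (Real.log M + α * Real.log t) / Real.log t := by gcongr
      _ = Real.log M / Real.log t + α := by field_simp


lemma aux_bounds (c d ν μ : ℝ) (hc : 0 < c) (hd : 0 < d) (hν : 0 ≤ ν) (hμ : 0 ≤ μ) :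
    ∃ m M : ℝ, 0 < m ∧ 0 < M ∧ ∀ t : ℝ, 1 ≤ t →
      m * t ^ (max 0 (1 + ν - max ν μ)) ≤
        1 + t * (1 + c * t ^ ν) / ((1 + c * t ^ ν) + d * t ^ μ) ∧
      1 + t * (1 + c * t ^ ν) / ((1 + c * t ^ ν) + d * t ^ μ) ≤
        M * t ^ (max 0 (1 + ν - max ν μ)) := by
  have hcd : 0 < min c d := lt_min hc hd
  have hC : 0 < (1 + c) / min c d := by positivity
  have hm' : 0 < c / (1 + c + d) := by positivity
  refine ⟨min 1 (c / (1 + c + d)), 1 + (1 + c) / min c d, lt_min one_pos hm',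
    by positivity, fun t ht => ?_⟩
  have ht0 : (0:ℝ) < t := lt_of_lt_of_le one_pos ht
  have htν : 1 ≤ t ^ ν := Real.one_le_rpow ht hν
  have htμ : 1 ≤ t ^ μ := Real.one_le_rpow ht hμ
  have tν_pos : 0 < t ^ ν := Real.rpow_pos_of_pos ht0 ν
  have tμ_pos : 0 < t ^ μ := Real.rpow_pos_of_pos ht0 μ
  have tβ_pos : 0 < t ^ (1 + ν - max ν μ) := Real.rpow_pos_of_pos ht0 _
  have htm : t ^ ν ≤ t ^ (max ν μ) := Real.rpow_le_rpow_of_exponent_le ht (le_max_left _ _)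
  have htm' : t ^ μ ≤ t ^ (max ν μ) := Real.rpow_le_rpow_of_exponent_le ht (le_max_right _ _)
  have htm1 : 1 ≤ t ^ (max ν μ) := le_trans htν htm
  have tmax_pos : 0 < t ^ (max ν μ) := lt_of_lt_of_le one_pos htm1
  have hexp : t ^ (1 + ν - max ν μ) * t ^ (max ν μ) = t * t ^ ν := by
    rw [← Real.rpow_add ht0]
    have h : 1 + ν - max ν μ + max ν μ = 1 + ν := by ring
    rw [h, Real.rpow_add ht0, Real.rpow_one]
  have hD0 : (0:ℝ) < (1 + c * t ^ ν) + d * t ^ μ := by positivity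
  have hF0 : 0 ≤ t * (1 + c * t ^ ν) / ((1 + c * t ^ ν) + d * t ^ μ) := by positivity
  have hDlow : min c d * t ^ (max ν μ) ≤ (1 + c * t ^ ν) + d * t ^ μ := by
    rcases max_choice ν μ with h | h <;> rw [h]
    · nlinarith [mul_le_mul_of_nonneg_right (min_le_left c d) tν_pos.le, mul_pos hd tμ_pos]
    · nlinarith [mul_le_mul_of_nonneg_right (min_le_right c d) tμ_pos.le, mul_pos hc tν_pos]
  have hDhigh : (1 + c * t ^ ν) + d * t ^ μ ≤ (1 + c + d) * t ^ (max ν μ) := by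
    nlinarith [mul_le_mul_of_nonneg_left htm hc.le,
      mul_le_mul_of_nonneg_left htm' hd.le, htm1]
  have hFup : t * (1 + c * t ^ ν) / ((1 + c * t ^ ν) + d * t ^ μ) ≤
      (1 + c) / min c d * t ^ (1 + ν - max ν μ) := by
    rw [div_le_iff₀ hD0]
    calc t * (1 + c * t ^ ν) ≤ (1 + c) * (t * t ^ ν) := by
          nlinarith [mul_le_mul_of_nonneg_left htν ht0.le]
      _ = (1 + c) / min c d * min c d * (t * t ^ ν) := by
          rw [div_mul_cancel₀ _ hcd.ne']
      _ = (1 + c) / min c d * t ^ (1 + ν - max ν μ) * (min c d * t ^ (max ν μ)) := by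
          rw [← hexp]; ring
      _ ≤ (1 + c) / min c d * t ^ (1 + ν - max ν μ) * ((1 + c * t ^ ν) + d * t ^ μ) :=
          mul_le_mul_of_nonneg_left hDlow (by positivity)
  have hFlow : c / (1 + c + d) * t ^ (1 + ν - max ν μ) ≤
      t * (1 + c * t ^ ν) / ((1 + c * t ^ ν) + d * t ^ μ) := by
    rw [le_div_iff₀ hD0]
    calc c / (1 + c + d) * t ^ (1 + ν - max ν μ) * ((1 + c * t ^ ν) + d * t ^ μ)
        ≤ c / (1 + c + d) * t ^ (1 + ν - max ν μ) * ((1 + c + d) * t ^ (max ν μ)) :=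
          mul_le_mul_of_nonneg_left hDhigh (by positivity)
      _ = c / (1 + c + d) * (1 + c + d) * (t ^ (1 + ν - max ν μ) * t ^ (max ν μ)) := by ring
      _ = c * (t * t ^ ν) := by
          rw [div_mul_cancel₀ _ (by positivity : (1:ℝ) + c + d ≠ 0), hexp]
      _ ≤ t * (1 + c * t ^ ν) := by nlinarith [ht0, mul_pos hc tν_pos]
  constructor
  · rcases le_total (1 + ν - max ν μ) 0 with hb | hb
    · rw [max_eq_left hb, Real.rpow_zero]
      have h1 : min 1 (c / (1 + c + d)) ≤ 1 := min_le_left _ _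
      linarith
    · rw [max_eq_right hb]
      calc min 1 (c / (1 + c + d)) * t ^ (1 + ν - max ν μ)
          ≤ c / (1 + c + d) * t ^ (1 + ν - max ν μ) :=
            mul_le_mul_of_nonneg_right (min_le_right _ _) tβ_pos.le
        _ ≤ t * (1 + c * t ^ ν) / ((1 + c * t ^ ν) + d * t ^ μ) := hFlow
        _ ≤ 1 + t * (1 + c * t ^ ν) / ((1 + c * t ^ ν) + d * t ^ μ) := by linarith
  · have htβα : t ^ (1 + ν - max ν μ) ≤ t ^ (max 0 (1 + ν - max ν μ)) :=
      Real.rpow_le_rpow_of_exponent_le ht (le_max_right _ _)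
    have htα1 : 1 ≤ t ^ (max 0 (1 + ν - max ν μ)) := Real.one_le_rpow ht (le_max_left _ _)
    nlinarith [hFup, mul_le_mul_of_nonneg_left htβα hC.le]


theorem ec_main (K ν μ : ℝ) (hK : 0 < K) (hν : 0 ≤ ν) (hμ : 0 ≤ μ) :
    Tendsto
      (fun t : ℝ =>
        (Real.logb 2
            (1 + t * (1 + K ^ 2 * t ^ ν / (1 + K) ^ 2) /
              ((1 + K ^ 2 * t ^ ν / (1 + K) ^ 2) + t ^ μ / (1 + K) ^ 2)) +
          Real.logb 2 (1 + t / (1 + K) ^ 2)) /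
          Real.logb 2 (1 + t))
      atTop (nhds (max 0 (1 + ν - max ν μ) + 1)) := by
  have hq : (0:ℝ) < (1 + K) ^ 2 := by positivity
  have hc : (0:ℝ) < K ^ 2 / (1 + K) ^ 2 := by positivity
  have hd : (0:ℝ) < 1 / (1 + K) ^ 2 := by positivity
  obtain ⟨m, M, hm, hM, hb⟩ := aux_bounds (K ^ 2 / (1 + K) ^ 2) (1 / (1 + K) ^ 2) ν μ hc hd hν hμ
  have T1 : Tendsto (fun t : ℝ => Real.log
      (1 + t * (1 + K ^ 2 / (1 + K) ^ 2 * t ^ ν) /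
        ((1 + K ^ 2 / (1 + K) ^ 2 * t ^ ν) + 1 / (1 + K) ^ 2 * t ^ μ)) / Real.log t)
      atTop (𝓝 (max 0 (1 + ν - max ν μ))) := by
    refine aux_log_ratio _ _ m M hm hM ?_
    filter_upwards [eventually_ge_atTop 1] with t ht
    exact hb t ht
  have T2 : Tendsto (fun t : ℝ => Real.log (1 + t / (1 + K) ^ 2) / Real.log t)
      atTop (𝓝 1) := by
    refine aux_log_ratio _ _ (1 / (1 + K) ^ 2) (1 + 1 / (1 + K) ^ 2) hd (by positivity) ?_
    filter_upwards [eventually_ge_atTop 1] with t ht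
    have ht0 : (0:ℝ) < t := by linarith
    rw [Real.rpow_one]
    constructor
    · have h1 : 1 / (1 + K) ^ 2 * t = t / (1 + K) ^ 2 := by ring
      rw [h1]; linarith
    · have h1 : (1 + 1 / (1 + K) ^ 2) * t = t + t / (1 + K) ^ 2 := by ring
      rw [h1]; linarith
  have T3 : Tendsto (fun t : ℝ => Real.log (1 + t) / Real.log t) atTop (𝓝 1) := by
    refine aux_log_ratio _ _ 1 2 one_pos two_pos ?_
    filter_upwards [eventually_ge_atTop 1] with t ht
    rw [Real.rpow_one, one_mul]
    constructor <;> linarith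
  have Tall := (T1.add T2).div T3 one_ne_zero
  rw [div_one] at Tall
  refine Tendsto.congr' ?_ Tall
  filter_upwards [eventually_ge_atTop 2] with t ht
  have ht1 : (1:ℝ) < t := by linarith
  have hlt : 0 < Real.log t := Real.log_pos ht1
  have hl3 : 0 < Real.log (1 + t) := Real.log_pos (by linarith)
  have hl2 : 0 < Real.log 2 := Real.log_pos (by norm_num)
  rw [show K ^ 2 * t ^ ν / (1 + K) ^ 2 = K ^ 2 / (1 + K) ^ 2 * t ^ ν by ring,
    show t ^ μ / (1 + K) ^ 2 = 1 / (1 + K) ^ 2 * t ^ μ by ring]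
  simp only [Real.logb]
  simp only [Pi.div_apply]
  field_simp

/-- Asymptotic multiplexing gain of estimate-and-cancel with scaling `K`:
with `SNR = t`, `INR = t^μ`, `SNR_side = t^ν` and `A(t) = 1 + K²·t^ν/(1+K)²`,
the normalized sum-rate converges to `max{1, min{2, 2 + ν − μ}}`; in particular
the limit is `min{2, 2 + ν − μ}` when `μ < ν + 1` and `1` when `μ ≥ ν + 1`. -/
theorem ec_mux_gain (K ν μ : ℝ) (hK : 0 < K) (hν : 0 ≤ ν) (hμ : 0 ≤ μ) :
    Tendsto
      (fun t : ℝ =>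
        (Real.logb 2
            (1 + t * (1 + K ^ 2 * t ^ ν / (1 + K) ^ 2) /
              ((1 + K ^ 2 * t ^ ν / (1 + K) ^ 2) + t ^ μ / (1 + K) ^ 2)) +
          Real.logb 2 (1 + t / (1 + K) ^ 2)) /
          Real.logb 2 (1 + t))
      atTop (nhds (max 1 (min 2 (2 + ν - μ)))) ∧
    (μ < ν + 1 → max 1 (min 2 (2 + ν - μ)) = min 2 (2 + ν - μ)) ∧
    (ν + 1 ≤ μ → max 1 (min 2 (2 + ν - μ)) = 1) := by
  have hval : max 1 (min 2 (2 + ν - μ)) = max 0 (1 + ν - max ν μ) + 1 := by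
    rcases le_total ν μ with h | h
    · rw [max_eq_right h]
      rcases le_total (1 + ν - μ) 0 with h2 | h2
      · rw [max_eq_left h2, min_eq_right (by linarith : 2 + ν - μ ≤ 2),
          max_eq_left (by linarith)]
        norm_num
      · rw [max_eq_right h2, min_eq_right (by linarith : 2 + ν - μ ≤ 2),
          max_eq_right (by linarith)]
        ring
    · rw [max_eq_left h, min_eq_left (by linarith : (2:ℝ) ≤ 2 + ν - μ),
        max_eq_right (by norm_num : (1:ℝ) ≤ 2)]
      norm_num
  refine ⟨?_, fun h => ?_, fun h => ?_⟩
  · rw [hval]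
    exact ec_main K ν μ hK hν hμ
  · exact max_eq_right (le_min (by norm_num) (by linarith))
  · rw [min_eq_right (by linarith : 2 + ν - μ ≤ 2), max_eq_left (by linarith)]
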